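/- The topological component χ_z(b) := z(p̄_{(∂₀b,o)} * b * p_{(∂₁b,o)}) of a 1-cocycle z with respect to a path-frame P_o satisfies the 1-cocycle identity χ_z(∂₀c)·χ_z(∂₂c) = χ_z(∂₁c) for all 2-simplices c, and for every loop ℓ based at the pole o one has χ_z(ℓ) = z(ℓ). -/

import Mathlib

/-- A 1-simplex of a poset `K`: two faces and a support dominating both. -/
structure OneSimplex (K : Type*) [PartialOrder K] where
  face0 : K
  face1 : K
  supp : K
  le0 : face0 ≤ supp
  le1 : face1 ≤ supp

/-- The reverse of a 1-simplex: same support, exchanged faces. -/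
def OneSimplex.rev {K : Type*} [PartialOrder K] (b : OneSimplex K) : OneSimplex K :=
  ⟨b.face1, b.face0, b.supp, b.le1, b.le0⟩

/-- The degenerate 1-simplex `σ₀ a` at a 0-simplex `a`. -/
def OneSimplex.degenerate {K : Type*} [PartialOrder K] (a : K) : OneSimplex K :=
  ⟨a, a, a, le_refl a, le_refl a⟩

/-- A 2-simplex of a poset `K`, presented by its three vertices, the supports of its
three faces, and its own support, with all required order relations. Its faces
`∂₀c, ∂₁c, ∂₂c` satisfy the simplicial identities by construction. -/
structure TwoSimplex (K : Type*) [PartialOrder K] where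
  vstart : K
  vmid : K
  vend : K
  s0 : K
  s1 : K
  s2 : K
  supp : K
  hs0 : s0 ≤ supp
  hs1 : s1 ≤ supp
  hs2 : s2 ≤ supp
  h0s : vmid ≤ s0
  h0e : vend ≤ s0
  h1s : vstart ≤ s1
  h1e : vend ≤ s1
  h2s : vstart ≤ s2
  h2e : vmid ≤ s2

/-- The face `∂₀c` (from `vmid` to `vend`). -/
def TwoSimplex.face0 {K : Type*} [PartialOrder K] (c : TwoSimplex K) : OneSimplex K :=
  ⟨c.vend, c.vmid, c.s0, c.h0e, c.h0s⟩

/-- The face `∂₁c` (from `vstart` to `vend`). -/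
def TwoSimplex.face1 {K : Type*} [PartialOrder K] (c : TwoSimplex K) : OneSimplex K :=
  ⟨c.vend, c.vstart, c.s1, c.h1e, c.h1s⟩

/-- The face `∂₂c` (from `vstart` to `vmid`). -/
def TwoSimplex.face2 {K : Type*} [PartialOrder K] (c : TwoSimplex K) : OneSimplex K :=
  ⟨c.vmid, c.vstart, c.s2, c.h2e, c.h2s⟩

/-- A path in the poset `K` from `x` to `y`: a nonempty composable string of
1-simplices, `∂₁` of the first being `x` and `∂₀` of the last being `y`. -/
inductive PPath (K : Type*) [PartialOrder K] : K → K → Type _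
  | single (b : OneSimplex K) : PPath K b.face1 b.face0
  | cons (b : OneSimplex K) {x : K} (p : PPath K x b.face1) : PPath K x b.face0

/-- Composition of paths: `q.comp p` first traverses `p`, then `q`. -/
def PPath.comp {K : Type*} [PartialOrder K] : ∀ {x y w : K}, PPath K y w → PPath K x y → PPath K x w
  | _, _, _, .single b, p => .cons b p
  | _, _, _, .cons b q, p => .cons b (q.comp p)

/-- The reverse of a path. -/
def PPath.rev {K : Type*} [PartialOrder K] : ∀ {x y : K}, PPath K x y → PPath K y x
  | _, _, .single b => .single b.rev
  | _, _, .cons b p => PPath.comp p.rev (.single b.rev)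

/-- Multiplicative extension of a function on 1-simplices to paths:
`z(bₙ * ⋯ * b₁) = z(bₙ) ⋯ z(b₁)`. -/
def PPath.eval {K : Type*} [PartialOrder K] {M : Type*} [Monoid M]
    (z : OneSimplex K → M) : ∀ {x y : K}, PPath K x y → M
  | _, _, .single b => z b
  | _, _, .cons b p => z b * p.eval z

/-- The support of the path is causally disjoint from `o` (every 1-simplex of the path
has support `⊥ o`). -/
def PPath.suppDisjoint {K : Type*} [PartialOrder K] (perp : K → K → Prop) (o : K) :
    ∀ {x y : K}, PPath K x y → Prop
  | _, _, .single b => perp b.supp o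
  | _, _, .cons b p => perp b.supp o ∧ p.suppDisjoint perp o

/-- Homotopy of paths with the same endpoints: the equivalence relation generated by
elementary deformations (replacing `∂₁c` by `∂₀c * ∂₂c` for a 2-simplex `c`), compatible
with composition. -/
inductive PHomotopic {K : Type*} [PartialOrder K] : ∀ {x y : K}, PPath K x y → PPath K x y → Prop
  | refl {x y : K} (p : PPath K x y) : PHomotopic p p
  | symm {x y : K} {p q : PPath K x y} : PHomotopic p q → PHomotopic q p
  | trans {x y : K} {p q r : PPath K x y} : PHomotopic p q → PHomotopic q r → PHomotopic p r
  | deform (c : TwoSimplex K) :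
      PHomotopic (.single c.face1) ((PPath.single c.face0).comp (.single c.face2))
  | comp_congr {x y w : K} {q q' : PPath K y w} {p p' : PPath K x y} :
      PHomotopic q q' → PHomotopic p p' → PHomotopic (q.comp p) (q'.comp p')

/-- The topological component of a 1-cocycle with respect to a path-frame `P` with pole `o`:
`χ_z(b) := z(p̄_{(∂₀b,o)} * b * p_{(∂₁b,o)})`. -/
def topComp {K : Type*} [PartialOrder K] {M : Type*} [Monoid M] {o : K}
    (P : ∀ a : K, PPath K o a) (z : OneSimplex K → M) (b : OneSimplex K) : M :=
  (((P b.face0).rev.comp (PPath.single b)).comp (P b.face1)).eval z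

section Aux

variable {K : Type*} [PartialOrder K] {M : Type*} [Monoid M]

lemma PPath.eval_comp (z : OneSimplex K → M) :
    ∀ {x y w : K} (q : PPath K y w) (p : PPath K x y),
      (q.comp p).eval z = q.eval z * p.eval z
  | _, _, _, .single b, p => rfl
  | _, _, _, .cons b q, p => by
      show z b * (q.comp p).eval z = (z b * q.eval z) * p.eval z
      rw [PPath.eval_comp z q p, mul_assoc]

lemma PPath.eval_homotopic (z : OneSimplex K → M)
    (hzc : ∀ c : TwoSimplex K, z c.face0 * z c.face2 = z c.face1)
    {x y : K} {p q : PPath K x y} (h : PHomotopic p q) : p.eval z = q.eval z := by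
  induction h with
  | refl p => rfl
  | symm _ ih => exact ih.symm
  | trans _ _ ih1 ih2 => exact ih1.trans ih2
  | deform c =>
      show z c.face1 = _
      erw [PPath.eval_comp]
      exact (hzc c).symm
  | comp_congr _ _ ih1 ih2 => rw [PPath.eval_comp, PPath.eval_comp, ih1, ih2]

lemma z_degenerate_eq_one {H : Type*} [NormedAddCommGroup H] [InnerProductSpace ℂ H]
    [CompleteSpace H] (z : OneSimplex K → (H →L[ℂ] H))
    (hzu : ∀ b : OneSimplex K, z b ∈ unitary (H →L[ℂ] H))
    (hzc : ∀ c : TwoSimplex K, z c.face0 * z c.face2 = z c.face1) (a : K) :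
    z (OneSimplex.degenerate a) = 1 := by
  have h := hzc ⟨a, a, a, a, a, a, a, le_refl a, le_refl a, le_refl a, le_refl a,
    le_refl a, le_refl a, le_refl a, le_refl a, le_refl a⟩
  have hd : z (OneSimplex.degenerate a) * z (OneSimplex.degenerate a)
      = z (OneSimplex.degenerate a) := h
  have hu := (Unitary.mem_iff.mp (hzu (OneSimplex.degenerate a))).1
  calc z (OneSimplex.degenerate a)
      = star (z (OneSimplex.degenerate a)) *
        (z (OneSimplex.degenerate a) * z (OneSimplex.degenerate a)) := by
        rw [← mul_assoc, hu, one_mul]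
    _ = star (z (OneSimplex.degenerate a)) * z (OneSimplex.degenerate a) := by rw [hd]
    _ = 1 := hu

lemma z_rev_mul {H : Type*} [NormedAddCommGroup H] [InnerProductSpace ℂ H]
    [CompleteSpace H] (z : OneSimplex K → (H →L[ℂ] H))
    (hzu : ∀ b : OneSimplex K, z b ∈ unitary (H →L[ℂ] H))
    (hzc : ∀ c : TwoSimplex K, z c.face0 * z c.face2 = z c.face1) (b : OneSimplex K) :
    z b.rev * z b = 1 := by
  have h := hzc ⟨b.face1, b.face0, b.face1, b.supp, b.face1, b.supp, b.supp,
    le_refl _, b.le1, le_refl _, b.le0, b.le1, le_refl _, le_refl _, b.le1, b.le0⟩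
  have : z b.rev * z b = z (OneSimplex.degenerate b.face1) := h
  rw [this, z_degenerate_eq_one z hzu hzc]

lemma z_mul_rev {H : Type*} [NormedAddCommGroup H] [InnerProductSpace ℂ H]
    [CompleteSpace H] (z : OneSimplex K → (H →L[ℂ] H))
    (hzu : ∀ b : OneSimplex K, z b ∈ unitary (H →L[ℂ] H))
    (hzc : ∀ c : TwoSimplex K, z c.face0 * z c.face2 = z c.face1) (b : OneSimplex K) :
    z b * z b.rev = 1 :=
  z_rev_mul z hzu hzc b.rev

lemma eval_rev_mul {H : Type*} [NormedAddCommGroup H] [InnerProductSpace ℂ H]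
    [CompleteSpace H] (z : OneSimplex K → (H →L[ℂ] H))
    (hzu : ∀ b : OneSimplex K, z b ∈ unitary (H →L[ℂ] H))
    (hzc : ∀ c : TwoSimplex K, z c.face0 * z c.face2 = z c.face1) :
    ∀ {x y : K} (p : PPath K x y), p.rev.eval z * p.eval z = 1
  | _, _, .single b => z_rev_mul z hzu hzc b
  | _, _, .cons b p => by
      show (PPath.comp p.rev (.single b.rev)).eval z * (z b * p.eval z) = 1
      erw [PPath.eval_comp]
      show (p.rev.eval z * z b.rev) * (z b * p.eval z) = 1
      rw [mul_assoc, ← mul_assoc (z b.rev), z_rev_mul z hzu hzc b, one_mul,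
        eval_rev_mul z hzu hzc p]

lemma eval_mul_rev {H : Type*} [NormedAddCommGroup H] [InnerProductSpace ℂ H]
    [CompleteSpace H] (z : OneSimplex K → (H →L[ℂ] H))
    (hzu : ∀ b : OneSimplex K, z b ∈ unitary (H →L[ℂ] H))
    (hzc : ∀ c : TwoSimplex K, z c.face0 * z c.face2 = z c.face1) :
    ∀ {x y : K} (p : PPath K x y), p.eval z * p.rev.eval z = 1
  | _, _, .single b => z_mul_rev z hzu hzc b
  | _, _, .cons b p => by
      show (z b * p.eval z) * (PPath.comp p.rev (.single b.rev)).eval z = 1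
      erw [PPath.eval_comp]
      show (z b * p.eval z) * (p.rev.eval z * z b.rev) = 1
      rw [mul_assoc, ← mul_assoc (p.eval z), eval_mul_rev z hzu hzc p, one_mul,
        z_mul_rev z hzu hzc b]

lemma topComp_eq {o : K} (P : ∀ a : K, PPath K o a) (z : OneSimplex K → M)
    (b : OneSimplex K) :
    topComp P z b = (P b.face0).rev.eval z * z b * (P b.face1).eval z := by
  unfold topComp
  rw [PPath.eval_comp, PPath.eval_comp]
  rfl

lemma eval_topComp {H : Type*} [NormedAddCommGroup H] [InnerProductSpace ℂ H]
    [CompleteSpace H] {o : K} (P : ∀ a : K, PPath K o a)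
    (z : OneSimplex K → (H →L[ℂ] H))
    (hzu : ∀ b : OneSimplex K, z b ∈ unitary (H →L[ℂ] H))
    (hzc : ∀ c : TwoSimplex K, z c.face0 * z c.face2 = z c.face1) :
    ∀ {x y : K} (p : PPath K x y),
      p.eval (topComp P z) = (P y).rev.eval z * (p.eval z * (P x).eval z)
  | _, _, .single b => by
      show topComp P z b = _
      rw [topComp_eq, mul_assoc]
      rfl
  | _, _, .cons b p => by
      show topComp P z b * p.eval (topComp P z) = _
      rw [topComp_eq, eval_topComp P z hzu hzc p]
      show _ = (P b.face0).rev.eval z * ((z b * p.eval z) * _)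
      simp only [mul_assoc]
      rw [← mul_assoc (PPath.eval z (P b.face1)), eval_mul_rev z hzu hzc (P b.face1), one_mul]

end Aux


theorem topological_component_cocycle_and_loops {K : Type*} [PartialOrder K]
    {H : Type*} [NormedAddCommGroup H] [InnerProductSpace ℂ H] [CompleteSpace H]
    (o : K) (P : ∀ a : K, PPath K o a)
    (hP : PHomotopic (P o) (PPath.single (OneSimplex.degenerate o)))
    (z : OneSimplex K → (H →L[ℂ] H))
    (hzu : ∀ b : OneSimplex K, z b ∈ unitary (H →L[ℂ] H))
    (hzc : ∀ c : TwoSimplex K, z c.face0 * z c.face2 = z c.face1) :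
    (∀ c : TwoSimplex K,
        topComp P z c.face0 * topComp P z c.face2 = topComp P z c.face1) ∧
    (∀ ℓ : PPath K o o, ℓ.eval (topComp P z) = ℓ.eval z) := by
  have h1 : (P o).eval z = 1 := by
    rw [PPath.eval_homotopic z hzc hP]
    exact z_degenerate_eq_one z hzu hzc o
  have h2 : (P o).rev.eval z = 1 := by
    have := eval_rev_mul z hzu hzc (P o)
    rwa [h1, mul_one] at this
  constructor
  · intro c
    rw [topComp_eq, topComp_eq, topComp_eq]
    show (PPath.eval z (P c.vend).rev * z c.face0 * PPath.eval z (P c.vmid)) *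
        (PPath.eval z (P c.vmid).rev * z c.face2 * PPath.eval z (P c.vstart)) =
        PPath.eval z (P c.vend).rev * z c.face1 * PPath.eval z (P c.vstart)
    rw [← hzc c]
    simp only [mul_assoc]
    rw [← mul_assoc (PPath.eval z (P c.vmid)), eval_mul_rev z hzu hzc (P c.vmid), one_mul]
  · intro l
    rw [eval_topComp P z hzu hzc l, h1, h2, one_mul, mul_one]
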